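/- Every board of isolated stacks of heights one and two in which every group has exactly four tiles is solvable: there exists a sequence of legal moves removing all tiles. -/

import Mathlib

/-- A board is a finite multiset of isolated stacks; each stack is a list of
tile groups, with the head of the list being the top tile of the stack. -/
abbrev Board (G : Type*) := Multiset (List G)

variable {G : Type*} [DecidableEq G]

/-- The number of tiles of group `g` remaining on the board. -/
def tileCount (B : Board G) (g : G) : ℕ := (B.map (fun s => s.count g)).sum

/-- The total number of tiles on the board. -/
def totalTiles (B : Board G) : ℕ := (B.map List.length).sum

/-- The board obtained by removing the (playable) top tiles of stacks `s₁` and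
`s₂`, the remaining stacks being `rest`; emptied stacks disappear. -/
def play (s₁ s₂ : List G) (rest : Board G) : Board G :=
  Multiset.filter (fun s => s ≠ []) (s₁.tail ::ₘ s₂.tail ::ₘ rest)

/-- A legal move: remove two playable (top) tiles of the same group. -/
def Move (B B' : Board G) : Prop :=
  ∃ (g : G) (s₁ s₂ : List G) (rest : Board G),
    B = s₁ ::ₘ s₂ ::ₘ rest ∧ s₁.head? = some g ∧ s₂.head? = some g ∧
    B' = play s₁ s₂ rest

/-- A board is solvable iff some sequence of legal moves empties it. -/
def Solvable (B : Board G) : Prop := Relation.ReflTransGen Move B 0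

/-- All stacks are nonempty and of height at most two. -/
def HeightsOK (B : Board G) : Prop := ∀ s ∈ B, s ≠ [] ∧ s.length ≤ 2

/-- A blocked cycle: distinct groups `p 0, …, p k`, each with exactly two
remaining tiles, such that for each `i` there is a height-two stack with a
`p (i+1)`-tile (cyclically) on top of a `p i`-tile. -/
def BlockedCycle (B : Board G) {k : ℕ} (p : Fin (k + 1) → G) : Prop :=
  Function.Injective p ∧ (∀ i, tileCount B (p i) = 2) ∧
    ∀ i, [p (i + 1), p i] ∈ B

/-- The board contains some blocked cycle. -/
def HasBlockedCycle (B : Board G) : Prop :=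
  ∃ (k : ℕ) (p : Fin (k + 1) → G), BlockedCycle B p

/-! ### Auxiliary lemmas -/

section Aux

set_option linter.unusedSectionVars false

lemma tileCount_cons (s : List G) (B : Board G) (g : G) :
    tileCount (s ::ₘ B) g = s.count g + tileCount B g := by
  simp [tileCount]

lemma tileCount_zero' (g : G) : tileCount (0 : Board G) g = 0 := rfl

lemma tileCount_le_of_le {B₁ B₂ : Board G} (h : B₁ ≤ B₂) (g : G) :
    tileCount B₁ g ≤ tileCount B₂ g := by
  obtain ⟨u, rfl⟩ := Multiset.le_iff_exists_add.mp h
  simp [tileCount]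

lemma one_le_tileCount_of_mem {B : Board G} {s : List G} {g : G}
    (hs : s ∈ B) (hg : g ∈ s) : 1 ≤ tileCount B g := by
  obtain ⟨B', rfl⟩ := Multiset.exists_cons_of_mem hs
  rw [tileCount_cons]
  have := List.count_pos_iff.mpr hg
  omega

lemma tileCount_filter_ne (M : Board G) (g : G) :
    tileCount (Multiset.filter (fun s => s ≠ []) M) g = tileCount M g := by
  conv_rhs => rw [← Multiset.filter_add_not (fun s => s ≠ []) M]
  rw [tileCount, tileCount, Multiset.map_add, Multiset.sum_add]
  have h1 : ∀ x ∈ Multiset.filter (fun s => ¬ s ≠ []) M, x.count g = 0 := by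
    intro x hx
    have := Multiset.of_mem_filter hx
    simp at this
    simp [this]
  have h0 : ((Multiset.filter (fun s => ¬ s ≠ []) M).map (fun s => s.count g)).sum = 0 := by
    rw [Multiset.sum_eq_zero]
    intro x hx
    obtain ⟨y, hy, rfl⟩ := Multiset.mem_map.mp hx
    exact h1 y hy
  omega

lemma head_cons_tail {s : List G} {g : G} (h : s.head? = some g) : s = g :: s.tail :=
  (List.cons_head?_tail (by simp [h])).symm

lemma tileCount_play {s₁ s₂ : List G} {rest : Board G} {g : G}
    (h1 : s₁.head? = some g) (h2 : s₂.head? = some g) (a : G) :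
    tileCount (s₁ ::ₘ s₂ ::ₘ rest) a
      = tileCount (play s₁ s₂ rest) a + (if a = g then 2 else 0) := by
  rw [play, tileCount_filter_ne]
  rw [tileCount_cons, tileCount_cons, tileCount_cons, tileCount_cons]
  rw [head_cons_tail h1, head_cons_tail h2]
  by_cases hag : a = g <;> simp [List.count_cons, hag, @eq_comm _ g a] <;> omega

lemma mem_play_two {s₁ s₂ : List G} {rest : Board G} {x y : G}
    (l1 : s₁.length ≤ 2) (l2 : s₂.length ≤ 2)
    (h : [x, y] ∈ play s₁ s₂ rest) : [x, y] ∈ rest := by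
  rw [play] at h
  have h' := Multiset.mem_of_mem_filter h
  rcases Multiset.mem_cons.mp h' with h'' | h''
  · exfalso
    have hl : s₁.tail.length ≤ 1 := by
      have := @List.length_tail _ s₁; omega
    rw [← h''] at hl; simp at hl
  rcases Multiset.mem_cons.mp h'' with h3 | h3
  · exfalso
    have hl : s₂.tail.length ≤ 1 := by
      have := @List.length_tail _ s₂; omega
    rw [← h3] at hl; simp at hl
  · exact h3

lemma heightsOK_play {s₁ s₂ : List G} {rest : Board G}
    (hH : HeightsOK (s₁ ::ₘ s₂ ::ₘ rest)) : HeightsOK (play s₁ s₂ rest) := by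
  intro s hs
  rw [play] at hs
  have hne := Multiset.of_mem_filter hs
  have hmem := Multiset.mem_of_mem_filter hs
  simp only [ne_eq] at hne
  refine ⟨hne, ?_⟩
  rcases Multiset.mem_cons.mp hmem with rfl | hmem'
  · have := (hH s₁ (by simp)).2
    have := @List.length_tail _ s₁; omega
  rcases Multiset.mem_cons.mp hmem' with rfl | hmem''
  · have := (hH s₂ (by simp)).2
    have := @List.length_tail _ s₂; omega
  · exact (hH s (by simp [hmem''])).2

lemma totalTiles_play {s₁ s₂ : List G} {rest : Board G}
    (h1 : s₁ ≠ []) (h2 : s₂ ≠ []) :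
    totalTiles (play s₁ s₂ rest) + 2 = totalTiles (s₁ ::ₘ s₂ ::ₘ rest) := by
  have key : ∀ M : Board G, totalTiles (Multiset.filter (fun s => s ≠ []) M) = totalTiles M := by
    intro M
    conv_rhs => rw [← Multiset.filter_add_not (fun s => s ≠ []) M]
    rw [totalTiles, totalTiles, Multiset.map_add, Multiset.sum_add]
    have h0 : ((Multiset.filter (fun s => ¬ s ≠ []) M).map List.length).sum = 0 := by
      rw [Multiset.sum_eq_zero]
      intro x hx
      obtain ⟨y, hy, rfl⟩ := Multiset.mem_map.mp hx
      have := Multiset.of_mem_filter hy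
      simp at this; simp [this]
    omega
  rw [play, key]
  rw [totalTiles, totalTiles]
  simp only [Multiset.map_cons, Multiset.sum_cons]
  have e1 := @List.length_tail _ s₁
  have e2 := @List.length_tail _ s₂
  have p1 : 1 ≤ s₁.length := List.length_pos_iff.mpr h1
  have p2 : 1 ≤ s₂.length := List.length_pos_iff.mpr h2
  omega

lemma pair_le {M : Multiset (List G)} {X Y : List G} (hX : X ∈ M) (hY : Y ∈ M) (hne : X ≠ Y) :
    X ::ₘ Y ::ₘ 0 ≤ M := by
  rcases Multiset.exists_cons_of_mem hX with ⟨M', rfl⟩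
  have hY' : Y ∈ M' := by
    rcases Multiset.mem_cons.mp hY with h | h
    · exact absurd h (fun hh => hne hh.symm)
    · exact h
  rcases Multiset.exists_cons_of_mem hY' with ⟨M'', rfl⟩
  apply Multiset.cons_le_cons
  apply Multiset.cons_le_cons
  simp

lemma triple_le {M : Multiset (List G)} {X Y Z : List G}
    (hX : X ∈ M) (hY : Y ∈ M) (hZ : Z ∈ M)
    (hXY : X ≠ Y) (hXZ : X ≠ Z) (hYZ : Y ≠ Z) :
    X ::ₘ Y ::ₘ Z ::ₘ 0 ≤ M := by
  rcases Multiset.exists_cons_of_mem hX with ⟨M', rfl⟩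
  have hY' : Y ∈ M' := by
    rcases Multiset.mem_cons.mp hY with h | h
    · exact absurd h (fun hh => hXY hh.symm)
    · exact h
  have hZ' : Z ∈ M' := by
    rcases Multiset.mem_cons.mp hZ with h | h
    · exact absurd h (fun hh => hXZ hh.symm)
    · exact h
  apply Multiset.cons_le_cons
  rcases Multiset.exists_cons_of_mem hY' with ⟨M'', rfl⟩
  have hZ'' : Z ∈ M'' := by
    rcases Multiset.mem_cons.mp hZ' with h | h
    · exact absurd h (fun hh => hYZ hh.symm)
    · exact h
  apply Multiset.cons_le_cons
  rcases Multiset.exists_cons_of_mem hZ'' with ⟨M3, rfl⟩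
  apply Multiset.cons_le_cons; simp

lemma three_le_tileCount {M : Board G} {X Y Z : List G} {g : G}
    (hX : X ∈ M) (hY : Y ∈ M) (hZ : Z ∈ M)
    (hXY : X ≠ Y) (hXZ : X ≠ Z) (hYZ : Y ≠ Z)
    (gX : g ∈ X) (gY : g ∈ Y) (gZ : g ∈ Z) :
    3 ≤ tileCount M g := by
  have h := tileCount_le_of_le (triple_le hX hY hZ hXY hXZ hYZ) g
  rw [tileCount_cons, tileCount_cons, tileCount_cons] at h
  have := List.count_pos_iff.mpr gX
  have := List.count_pos_iff.mpr gY
  have := List.count_pos_iff.mpr gZ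
  have : tileCount (0 : Board G) g = 0 := rfl
  omega

lemma count2_pin {M : Board G} {X Z : List G} {g : G}
    (hX : X ∈ M) (hXg : X.count g = 2) (hZ : Z ∈ M) (hne : Z ≠ X) (gZ : g ∈ Z) :
    3 ≤ tileCount M g := by
  have h := tileCount_le_of_le (pair_le hX hZ (fun hh => hne hh.symm)) g
  rw [tileCount_cons, tileCount_cons] at h
  have := List.count_pos_iff.mpr gZ
  have : tileCount (0 : Board G) g = 0 := rfl
  omega

lemma orbit_mem {S : Finset G} {f : G → G} (hmap : ∀ a ∈ S, f a ∈ S) :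
    ∀ n, ∀ a ∈ S, f^[n] a ∈ S := by
  intro n
  induction n with
  | zero => intro a ha; simpa using ha
  | succ n ih =>
    intro a ha
    rw [Function.iterate_succ_apply]
    exact ih (f a) (hmap a ha)

lemma iterate_cancel {S : Finset G} {f : G → G} (hmap : ∀ a ∈ S, f a ∈ S)
    (hinj : Set.InjOn f S) :
    ∀ n, ∀ a ∈ S, ∀ b ∈ S, f^[n] a = f^[n] b → a = b := by
  intro n
  induction n with
  | zero => intro a _ b _ h; simpa using h
  | succ n ih =>
    intro a ha b hb h
    rw [Function.iterate_succ_apply, Function.iterate_succ_apply] at h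
    exact hinj ha hb (ih (f a) (hmap a ha) (f b) (hmap b hb) h)

lemma exists_return {S : Finset G} {f : G → G} (hmap : ∀ a ∈ S, f a ∈ S)
    (hinj : Set.InjOn f S) {g : G} (hg : g ∈ S) : ∃ N, 0 < N ∧ f^[N] g = g := by
  have hpig := Finset.exists_ne_map_eq_of_card_lt_of_maps_to
    (s := Finset.range (S.card + 1)) (t := S)
    (by simp) (fun n _ => orbit_mem hmap n g hg)
  obtain ⟨i, _, j, _, hij, heq⟩ := hpig
  rcases Nat.lt_or_ge i j with h | h
  · refine ⟨j - i, by omega, ?_⟩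
    have hcan : f^[i] (f^[j-i] g) = f^[i] g := by
      rw [← Function.iterate_add_apply]
      rw [show i + (j - i) = j by omega, heq]
    exact iterate_cancel hmap hinj i _ (orbit_mem hmap _ g hg) g hg hcan
  · have h' : j < i := by omega
    refine ⟨i - j, by omega, ?_⟩
    have hcan : f^[j] (f^[i-j] g) = f^[j] g := by
      rw [← Function.iterate_add_apply]
      rw [show j + (i - j) = i by omega, heq.symm]
    exact iterate_cancel hmap hinj j _ (orbit_mem hmap _ g hg) g hg hcan

lemma hbc_of_badS {B : Board G} (S : Finset G) (hS : S.Nonempty) (f : G → G)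
    (hf : ∀ a ∈ S, f a ∈ S ∧ tileCount B a = 2 ∧ [f a, a] ∈ B) :
    HasBlockedCycle B := by
  obtain ⟨x₀, hx₀⟩ := hS
  have hmap : ∀ a ∈ S, f a ∈ S := fun a ha => (hf a ha).1
  have horb := orbit_mem hmap
  have hpig := Finset.exists_ne_map_eq_of_card_lt_of_maps_to
    (s := Finset.range (S.card + 1)) (t := S)
    (by simp) (fun n _ => horb n x₀ hx₀)
  obtain ⟨i, _, j, _, hij, heq⟩ := hpig
  have key : ∃ (x : G) (d : ℕ), x ∈ S ∧ 0 < d ∧ f^[d] x = x := by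
    rcases Nat.lt_or_ge i j with h | h
    · refine ⟨f^[i] x₀, j - i, horb i x₀ hx₀, by omega, ?_⟩
      rw [← Function.iterate_add_apply, show j - i + i = j by omega, ← heq]
    · have h' : j < i := by omega
      refine ⟨f^[j] x₀, i - j, horb j x₀ hx₀, by omega, ?_⟩
      rw [← Function.iterate_add_apply, show i - j + j = i by omega, heq]
  obtain ⟨x, d, hxS, hd, hdx⟩ := key
  have hex : ∃ n, 0 < n ∧ f^[n] x = x := ⟨d, hd, hdx⟩
  classical
  set d₀ := Nat.find hex with hd₀def
  obtain ⟨hd₀pos, hd₀x⟩ := Nat.find_spec hex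
  have hmin : ∀ m, m < d₀ → ¬ (0 < m ∧ f^[m] x = x) := fun m hm => Nat.find_min hex hm
  refine ⟨d₀ - 1, fun i => f^[(i : ℕ)] x, ?_, ?_, ?_⟩
  · intro a b hab
    have ha : (a : ℕ) < d₀ := by have := a.isLt; omega
    have hb : (b : ℕ) < d₀ := by have := b.isLt; omega
    by_contra hne
    have hne' : (a : ℕ) ≠ (b : ℕ) := fun h => hne (Fin.ext h)
    have main : ∀ m n : ℕ, m < n → n < d₀ → f^[m] x = f^[n] x → False := by
      intro m n hmn hn h
      have hit : f^[d₀ - n + m] x = x := by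
        rw [Function.iterate_add_apply, h, ← Function.iterate_add_apply,
          show d₀ - n + n = d₀ by omega, hd₀x]
      exact hmin (d₀ - n + m) (by omega) ⟨by omega, hit⟩
    rcases Nat.lt_or_ge (a : ℕ) (b : ℕ) with h | h
    · exact main a b h hb hab
    · exact main b a (by omega) ha hab.symm
  · intro i
    exact (hf _ (horb _ x hxS)).2.1
  · intro i
    have hstep : f^[((i + 1 : Fin (d₀ - 1 + 1)) : ℕ)] x = f (f^[(i : ℕ)] x) := by
      have hval : ((i + 1 : Fin (d₀ - 1 + 1)) : ℕ) = ((i : ℕ) + 1) % (d₀ - 1 + 1) := by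
        simp [Fin.add_def]
      rcases Nat.lt_or_ge ((i : ℕ) + 1) (d₀ - 1 + 1) with h | h
      · rw [hval, Nat.mod_eq_of_lt h, Function.iterate_succ_apply']
      · have hik : (i : ℕ) = d₀ - 1 := by have := i.isLt; omega
        have hmod : ((i : ℕ) + 1) % (d₀ - 1 + 1) = 0 := by
          rw [hik]; simp
        rw [hval, hmod]
        simp only [Function.iterate_zero_apply]
        conv_lhs => rw [← hd₀x]
        rw [show Nat.find hex = ((i : ℕ)) + 1 by omega, Function.iterate_succ_apply']
    show [f^[((i + 1 : Fin (d₀ - 1 + 1)) : ℕ)] x, f^[(i : ℕ)] x] ∈ B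
    rw [hstep]
    exact (hf _ (horb _ x hxS)).2.2

lemma badS_of_hbc {B : Board G} (h : HasBlockedCycle B) :
    ∃ (S : Finset G) (f : G → G), S.Nonempty ∧
      (∀ a ∈ S, f a ∈ S ∧ tileCount B a = 2 ∧ [f a, a] ∈ B) ∧
      Set.InjOn f S ∧ (∀ a ∈ S, ∃ b ∈ S, f b = a) := by
  classical
  obtain ⟨k, p, hinj, hcnt, hstk⟩ := h
  refine ⟨Finset.image p Finset.univ,
    fun a => if h : ∃ i, p i = a then p (h.choose + 1) else a, ?_, ?_, ?_, ?_⟩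
  · exact ⟨p 0, Finset.mem_image.mpr ⟨0, Finset.mem_univ _, rfl⟩⟩
  · intro a ha
    obtain ⟨i, _, rfl⟩ := Finset.mem_image.mp ha
    have hex : ∃ j, p j = p i := ⟨i, rfl⟩
    have hch : hex.choose = i := hinj hex.choose_spec
    refine ⟨?_, hcnt i, ?_⟩
    · simp only [dif_pos hex, hch]
      exact Finset.mem_image.mpr ⟨i + 1, Finset.mem_univ _, rfl⟩
    · simp only [dif_pos hex, hch]
      exact hstk i
  · intro a ha b hb hab
    simp only [Finset.coe_image, Set.mem_image] at ha hb
    obtain ⟨i, _, rfl⟩ := ha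
    obtain ⟨j, _, rfl⟩ := hb
    simp only at hab
    have hexi : ∃ l, p l = p i := ⟨i, rfl⟩
    have hexj : ∃ l, p l = p j := ⟨j, rfl⟩
    rw [dif_pos hexi, dif_pos hexj] at hab
    have h1 : hexi.choose = i := hinj hexi.choose_spec
    have h2 : hexj.choose = j := hinj hexj.choose_spec
    rw [h1, h2] at hab
    have hij := hinj hab
    have hij' : i = j := by
      have := add_right_cancel hij
      exact this
    rw [hij']
  · intro a ha
    obtain ⟨i, _, rfl⟩ := Finset.mem_image.mp ha
    refine ⟨p (i - 1), Finset.mem_image.mpr ⟨i - 1, Finset.mem_univ _, rfl⟩, ?_⟩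
    have hex : ∃ l, p l = p (i - 1) := ⟨i - 1, rfl⟩
    show (if h : ∃ l, p l = p (i - 1) then p (h.choose + 1) else p (i - 1)) = p i
    rw [dif_pos hex, hinj hex.choose_spec]
    congr 1
    exact sub_add_cancel i 1

lemma exists_two_heads {B : Board G} (hB : B ≠ 0) (hH : HeightsOK B)
    (h24 : ∀ g, tileCount B g = 0 ∨ tileCount B g = 2 ∨ tileCount B g = 4)
    (hnc : ¬ HasBlockedCycle B) :
    ∃ (g : G) (s₁ s₂ : List G) (rest : Board G),
      B = s₁ ::ₘ s₂ ::ₘ rest ∧ s₁.head? = some g ∧ s₂.head? = some g := by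
  classical
  set H : Multiset G := B.bind (fun s => (↑(s.take 1) : Multiset G)) with hHdef
  set O : Multiset G := B.bind (fun s => (↑(s.drop 1) : Multiset G)) with hOdef
  have hHO : ∀ g, tileCount B g = H.count g + O.count g := by
    intro g
    rw [hHdef, hOdef, Multiset.count_bind, Multiset.count_bind, tileCount,
      ← Multiset.sum_map_add]
    apply congrArg
    apply Multiset.map_congr rfl
    intro s _
    simp only [Multiset.coe_count]
    conv_lhs => rw [← List.take_append_drop 1 s]
    rw [List.count_append]
  have head_of_mem_H : ∀ g, g ∈ H → ∃ s ∈ B, s.head? = some g := by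
    intro g hg
    obtain ⟨s, hs, hgs⟩ := Multiset.mem_bind.mp hg
    refine ⟨s, hs, ?_⟩
    have hne := (hH s hs).1
    rcases s with _ | ⟨a, t⟩
    · simp at hne
    · simp only [List.take_succ_cons, List.take_zero] at hgs
      simp only [Multiset.mem_coe, List.mem_singleton] at hgs
      simp [hgs]
  by_cases htwo : ∃ g, 2 ≤ H.count g
  · obtain ⟨g, hg2⟩ := htwo
    have hg1 : g ∈ H := by
      rw [← Multiset.count_pos]; omega
    obtain ⟨s₁, hs₁, hh₁⟩ := head_of_mem_H g hg1
    obtain ⟨B₁, rfl⟩ := Multiset.exists_cons_of_mem hs₁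
    have hsplit : H = (↑(s₁.take 1) : Multiset G)
        + B₁.bind (fun s => (↑(s.take 1) : Multiset G)) := by
      rw [hHdef, Multiset.cons_bind]
    have hcount1 : (↑(s₁.take 1) : Multiset G).count g ≤ 1 := by
      have h1 : (s₁.take 1).length ≤ 1 := by simp
      have h := List.count_le_length (l := s₁.take 1) (a := g)
      simp only [Multiset.coe_count]
      omega
    have hg1' : g ∈ B₁.bind (fun s => (↑(s.take 1) : Multiset G)) := by
      rw [← Multiset.count_pos]
      rw [hsplit, Multiset.count_add] at hg2
      omega
    obtain ⟨s₂, hs₂, hgs₂⟩ := Multiset.mem_bind.mp hg1'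
    have hh₂ : s₂.head? = some g := by
      have hne := (hH s₂ (Multiset.mem_cons_of_mem hs₂)).1
      rcases s₂ with _ | ⟨a, t⟩
      · simp at hne
      · simp only [List.take_succ_cons, List.take_zero] at hgs₂
        simp only [Multiset.mem_coe, List.mem_singleton] at hgs₂
        simp [hgs₂]
    obtain ⟨rest, rfl⟩ := Multiset.exists_cons_of_mem hs₂
    exact ⟨g, s₁, s₂, rest, rfl, hh₁, hh₂⟩
  · exfalso
    push_neg at htwo
    have hH1 : ∀ g, H.count g ≤ 1 := fun g => by have := htwo g; omega
    have hcardH : Multiset.card H = Multiset.card B := by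
      rw [hHdef, Multiset.card_bind]
      have hmc : (B.map (Multiset.card ∘ fun s => (↑(s.take 1) : Multiset G)))
          = B.map (fun _ => 1) := by
        apply Multiset.map_congr rfl
        intro s hs
        have hne := (hH s hs).1
        have hlen : 1 ≤ s.length := List.length_pos_iff.mpr hne
        simp [Function.comp]
        omega
      rw [hmc, Multiset.map_const', Multiset.sum_replicate, smul_eq_mul, mul_one]
    have hcardO : Multiset.card O ≤ Multiset.card B := by
      rw [hOdef, Multiset.card_bind]
      have hle : ((B.map (Multiset.card ∘ fun s => (↑(s.drop 1) : Multiset G)))).sum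
          ≤ (B.map (fun _ => 1)).sum := by
        apply Multiset.sum_map_le_sum_map
        intro s hs
        have hlen := (hH s hs).2
        simp [Function.comp]
        omega
      calc _ ≤ (B.map (fun _ => 1)).sum := hle
        _ = Multiset.card B := by
          rw [Multiset.map_const', Multiset.sum_replicate, smul_eq_mul, mul_one]
    have hle : H ≤ O := by
      rw [Multiset.le_iff_count]
      intro g
      rcases Nat.eq_zero_or_pos (H.count g) with h0 | h1
      · omega
      · have hgt : tileCount B g ≠ 0 := by
          rw [hHO g]; omega
        have := h24 g
        have := hHO g
        have := hH1 g
        omega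
    have hHO' : H = O := Multiset.eq_of_le_of_card_le hle (hcardH ▸ hcardO)
    set S := H.toFinset with hSdef
    have hexx : ∀ a ∈ S, ∃ x, [x, a] ∈ B := by
      intro a ha
      have haO : a ∈ O := by rw [← hHO']; exact Multiset.mem_toFinset.mp ha
      obtain ⟨s, hs, has⟩ := Multiset.mem_bind.mp haO
      have hlen := (hH s hs).2
      have hne := (hH s hs).1
      rcases s with _ | ⟨b, t⟩
      · simp at hne
      rcases t with _ | ⟨c, t'⟩
      · simp at has
      rcases t' with _ | _
      · simp only [List.drop_succ_cons, List.drop_zero] at has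
        simp only [Multiset.mem_coe, List.mem_singleton] at has
        subst has
        exact ⟨b, hs⟩
      · simp at hlen
    set f : G → G := fun a => if h : ∃ x, [x, a] ∈ B then h.choose else a with hfdef
    apply hnc
    have hSne : S.Nonempty := by
      obtain ⟨s, hs⟩ := Multiset.exists_mem_of_ne_zero hB
      have hne := (hH s hs).1
      rcases s with _ | ⟨a, t⟩
      · simp at hne
      · refine ⟨a, Multiset.mem_toFinset.mpr ?_⟩
        exact Multiset.mem_bind.mpr ⟨a :: t, hs, by simp⟩
    apply hbc_of_badS S hSne f
    intro a ha
    have hx := hexx a ha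
    have hfa : [f a, a] ∈ B := by
      rw [hfdef]
      simp only [dif_pos hx]
      exact hx.choose_spec
    have hcnt : ∀ b ∈ S, tileCount B b = 2 := by
      intro b hb
      have hbH : b ∈ H := Multiset.mem_toFinset.mp hb
      have h1 : 1 ≤ H.count b := Multiset.count_pos.mpr hbH
      have h2 := hH1 b
      have h3 := hHO b
      have h4 : O.count b = H.count b := by rw [← hHO']
      omega
    refine ⟨?_, hcnt a ha, hfa⟩
    · apply Multiset.mem_toFinset.mpr
      exact Multiset.mem_bind.mpr ⟨[f a, a], hfa, by simp⟩

lemma swap3 {a b c : List G} {M : Board G} :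
    a ::ₘ b ::ₘ c ::ₘ M = c ::ₘ a ::ₘ b ::ₘ M := by
  rw [Multiset.cons_swap b c, Multiset.cons_swap a c]

/-- The key step: a nonempty board satisfying the invariant admits a move
preserving the "no blocked cycle" property. -/
lemma exists_safe_move {B : Board G} (hB : B ≠ 0) (hH : HeightsOK B)
    (h24 : ∀ g, tileCount B g = 0 ∨ tileCount B g = 2 ∨ tileCount B g = 4)
    (hnc : ¬ HasBlockedCycle B) :
    ∃ B', Move B B' ∧ ¬ HasBlockedCycle B' := by
  classical
  obtain ⟨g, s₁, s₂, rest, hBeq, h1, h2⟩ := exists_two_heads hB hH h24 hnc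
  have hs₁B : s₁ ∈ B := by rw [hBeq]; simp
  have hs₂B : s₂ ∈ B := by rw [hBeq]; simp
  have l1 : s₁.length ≤ 2 := (hH s₁ hs₁B).2
  have l2 : s₂.length ≤ 2 := (hH s₂ hs₂B).2
  by_cases hc1 : HasBlockedCycle (play s₁ s₂ rest)
  swap
  · exact ⟨play s₁ s₂ rest, ⟨g, s₁, s₂, rest, hBeq, h1, h2, rfl⟩, hc1⟩
  obtain ⟨S, f, hSne, hf, hinj, hsurj⟩ := badS_of_hbc hc1
  have hcnt : ∀ a, tileCount B a = tileCount (play s₁ s₂ rest) a + (if a = g then 2 else 0) := by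
    intro a; rw [hBeq]; exact tileCount_play h1 h2 a
  have hmem2 : ∀ x y : G, [x, y] ∈ play s₁ s₂ rest → [x, y] ∈ rest :=
    fun x y h => mem_play_two l1 l2 h
  have hmemB : ∀ x y : G, [x, y] ∈ play s₁ s₂ rest → [x, y] ∈ B := by
    intro x y h
    rw [hBeq]
    exact Multiset.mem_cons_of_mem (Multiset.mem_cons_of_mem (hmem2 x y h))
  -- g must be in S
  have hgS : g ∈ S := by
    by_contra hgS
    apply hnc
    apply hbc_of_badS S hSne f
    intro a ha
    obtain ⟨hfa, hca, hsa⟩ := hf a ha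
    have hag : a ≠ g := fun h => hgS (h ▸ ha)
    refine ⟨hfa, ?_, hmemB _ _ hsa⟩
    rw [hcnt a, if_neg hag, hca]
  have hg4 : tileCount B g = 4 := by
    have ha1 := (hf g hgS).2.1
    have ha2 := hcnt g
    rw [if_pos rfl] at ha2
    omega
  -- the two special stacks C = [g, c] and D = [f g, g]
  obtain ⟨c, hcS, hfc⟩ := hsurj g hgS
  have hCmem : [g, c] ∈ rest := hmem2 _ _ (hfc ▸ (hf c hcS).2.2)
  have hDmem : [f g, g] ∈ rest := hmem2 _ _ (hf g hgS).2.2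
  have e₁ : s₁ = g :: s₁.tail := head_cons_tail h1
  have e₂ : s₂ = g :: s₂.tail := head_cons_tail h2
  by_cases hcg : c = g
  · -- Case A : C = [g, g]
    subst hcg
    obtain ⟨rest', hrest⟩ := Multiset.exists_cons_of_mem hCmem
    have hBeq' : B = [c, c] ::ₘ s₁ ::ₘ (s₂ ::ₘ rest') := by
      rw [hBeq, hrest, swap3]
    -- pin the counts
    have hpin : s₁.count c = 1 ∧ s₂.count c = 1 ∧ tileCount rest' c = 0 := by
      have h4 : tileCount B c = s₁.count c + s₂.count c + 2 + tileCount rest' c := by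
        rw [hBeq, hrest, tileCount_cons, tileCount_cons, tileCount_cons]
        have hcc : List.count c [c, c] = 2 := by simp
        omega
      have hs1 : 1 ≤ s₁.count c := by
        rw [e₁]; simp [List.count_cons]
      have hs2 : 1 ≤ s₂.count c := by
        rw [e₂]; simp [List.count_cons]
      omega
    refine ⟨play [c, c] s₁ (s₂ ::ₘ rest'),
      ⟨c, [c, c], s₁, s₂ ::ₘ rest', hBeq', rfl, h1, rfl⟩, ?_⟩
    intro hc2
    obtain ⟨S₂, f₂, hSne₂, hf₂, hinj₂, hsurj₂⟩ := badS_of_hbc hc2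
    have hmem2' : ∀ x y : G, [x, y] ∈ play [c, c] s₁ (s₂ ::ₘ rest') →
        [x, y] ∈ s₂ ::ₘ rest' := fun x y h => mem_play_two (by simp) l1 h
    have hcnt₂ : ∀ a, tileCount B a
        = tileCount (play [c, c] s₁ (s₂ ::ₘ rest')) a + (if a = c then 2 else 0) := by
      intro a; rw [hBeq']
      exact tileCount_play (show ([c, c] : List G).head? = some c from rfl) h1 a
    have hgS₂ : c ∈ S₂ := by
      by_contra hgS₂
      apply hnc
      apply hbc_of_badS S₂ hSne₂ f₂
      intro a ha
      obtain ⟨hfa, hca, hsa⟩ := hf₂ a ha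
      have hag : a ≠ c := fun h => hgS₂ (h ▸ ha)
      have hmm := hmem2' _ _ hsa
      refine ⟨hfa, by rw [hcnt₂ a, if_neg hag, hca], ?_⟩
      rw [hBeq']
      rcases Multiset.mem_cons.mp hmm with h | h
      · rw [h]; simp
      · exact Multiset.mem_cons_of_mem (Multiset.mem_cons_of_mem
          (Multiset.mem_cons_of_mem h))
    obtain ⟨c₂, hc₂S, hfc₂⟩ := hsurj₂ c hgS₂
    have hC₂ : [c, c₂] ∈ s₂ ::ₘ rest' := hmem2' _ _ (hfc₂ ▸ (hf₂ c₂ hc₂S).2.2)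
    have hs₂eq : s₂ = [c, c₂] := by
      rcases Multiset.mem_cons.mp hC₂ with h | h
      · exact h.symm
      · exfalso
        have := one_le_tileCount_of_mem h (by simp : c ∈ [c, c₂])
        omega
    have hc₂g : c₂ ≠ c := by
      intro h
      rw [h] at hs₂eq
      rw [hs₂eq] at hpin
      simp [List.count_cons] at hpin
    have hD₂ : [f₂ c, c] ∈ s₂ ::ₘ rest' := hmem2' _ _ (hf₂ c hgS₂).2.2
    rcases Multiset.mem_cons.mp hD₂ with h | h
    · rw [hs₂eq] at h
      simp only [List.cons.injEq, and_true] at h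
      exact (hc₂g h.2.symm).elim
    · have := one_le_tileCount_of_mem h (by simp : c ∈ [f₂ c, c])
      omega
  · -- Case B : c ≠ g
    have hfgg : f g ≠ g := by
      intro hfg
      -- D = [g, g] and C = [g, c] both in rest : too many g tiles
      rw [hfg] at hDmem
      have hCD : ([g, c] : List G) ≠ [g, g] := by
        intro h
        simp only [List.cons.injEq, and_true] at h
        exact hcg h.2
      have h3 : 3 ≤ tileCount rest g := by
        apply count2_pin hDmem (by simp [List.count_cons]) hCmem hCD (by simp)
      have h4 : tileCount B g = s₁.count g + s₂.count g + tileCount rest g := by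
        rw [hBeq, tileCount_cons, tileCount_cons]
        omega
      have hs1 : 1 ≤ s₁.count g := by rw [e₁]; simp [List.count_cons]
      have hs2 : 1 ≤ s₂.count g := by rw [e₂]; simp [List.count_cons]
      omega
    have hCD : ([g, c] : List G) ≠ [f g, g] := by
      intro h
      simp only [List.cons.injEq, and_true] at h
      exact hfgg h.1.symm
    obtain ⟨rest₁, hrest₁⟩ := Multiset.exists_cons_of_mem hCmem
    have hDmem₁ : [f g, g] ∈ rest₁ := by
      rcases Multiset.mem_cons.mp (hrest₁ ▸ hDmem) with h | h
      · exact absurd h.symm hCD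
      · exact h
    obtain ⟨rest', hrest'⟩ := Multiset.exists_cons_of_mem hDmem₁
    have hrest : rest = [g, c] ::ₘ [f g, g] ::ₘ rest' := by
      rw [hrest₁, hrest']
    have hBeq' : B = [g, c] ::ₘ s₁ ::ₘ (s₂ ::ₘ [f g, g] ::ₘ rest') := by
      rw [hBeq, hrest]
      exact swap3
    -- pin the counts of g
    have hpin : s₁.count g = 1 ∧ s₂.count g = 1 ∧ tileCount rest' g = 0 := by
      have h4 : tileCount B g
          = s₁.count g + s₂.count g + 1 + 1 + tileCount rest' g := by
        rw [hBeq, hrest, tileCount_cons, tileCount_cons, tileCount_cons, tileCount_cons]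
        have c1 : List.count g [g, c] = 1 := by
          simp [List.count_cons, hcg]
        have c2 : List.count g [f g, g] = 1 := by
          simp [List.count_cons, hfgg]
        omega
      have hs1 : 1 ≤ s₁.count g := by rw [e₁]; simp [List.count_cons]
      have hs2 : 1 ≤ s₂.count g := by rw [e₂]; simp [List.count_cons]
      omega
    refine ⟨play [g, c] s₁ (s₂ ::ₘ [f g, g] ::ₘ rest'),
      ⟨g, [g, c], s₁, s₂ ::ₘ [f g, g] ::ₘ rest', hBeq', rfl, h1, rfl⟩, ?_⟩
    intro hc2
    obtain ⟨S₂, f₂, hSne₂, hf₂, hinj₂, hsurj₂⟩ := badS_of_hbc hc2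
    set R₂ : Board G := s₂ ::ₘ [f g, g] ::ₘ rest' with hR₂
    have hmem2' : ∀ x y : G, [x, y] ∈ play [g, c] s₁ R₂ → [x, y] ∈ R₂ :=
      fun x y h => mem_play_two (by simp) l1 h
    have hmemB' : ∀ x y : G, [x, y] ∈ play [g, c] s₁ R₂ → [x, y] ∈ B := by
      intro x y h
      rw [hBeq']
      exact Multiset.mem_cons_of_mem (Multiset.mem_cons_of_mem (hmem2' x y h))
    have hcnt₂ : ∀ a, tileCount B a
        = tileCount (play [g, c] s₁ R₂) a + (if a = g then 2 else 0) := by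
      intro a; rw [hBeq']
      exact tileCount_play (show ([g, c] : List G).head? = some g from rfl) h1 a
    have hgS₂ : g ∈ S₂ := by
      by_contra hgS₂
      apply hnc
      apply hbc_of_badS S₂ hSne₂ f₂
      intro a ha
      obtain ⟨hfa, hca, hsa⟩ := hf₂ a ha
      have hag : a ≠ g := fun h => hgS₂ (h ▸ ha)
      exact ⟨hfa, by rw [hcnt₂ a, if_neg hag, hca], hmemB' _ _ hsa⟩
    -- identify s₂ = [g, c₂]
    obtain ⟨c₂, hc₂S, hfc₂⟩ := hsurj₂ g hgS₂
    have hC₂ : [g, c₂] ∈ R₂ := hmem2' _ _ (hfc₂ ▸ (hf₂ c₂ hc₂S).2.2)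
    have hs₂eq : s₂ = [g, c₂] := by
      rcases Multiset.mem_cons.mp hC₂ with h | h
      · exact h.symm
      rcases Multiset.mem_cons.mp h with h' | h'
      · exfalso
        simp only [List.cons.injEq, and_true] at h'
        have : g = f g := h'.1
        exact hfgg this.symm
      · exfalso
        have := one_le_tileCount_of_mem h' (by simp : g ∈ [g, c₂])
        omega
    have hc₂g : c₂ ≠ g := by
      intro h
      rw [h] at hs₂eq
      rw [hs₂eq] at hpin
      simp [List.count_cons] at hpin
    -- f₂ g = f g
    have hfg₂ : f₂ g = f g := by
      have hD₂ : [f₂ g, g] ∈ R₂ := hmem2' _ _ (hf₂ g hgS₂).2.2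
      rcases Multiset.mem_cons.mp hD₂ with h | h
      · exfalso
        rw [hs₂eq] at h
        simp only [List.cons.injEq, and_true] at h
        exact hc₂g h.2.symm
      rcases Multiset.mem_cons.mp h with h' | h'
      · simp only [List.cons.injEq, and_true] at h'
        exact h'
      · exfalso
        have := one_le_tileCount_of_mem h' (by simp : g ∈ [f₂ g, g])
        omega
    -- c₂ ≠ c
    have hcc₂ : c₂ ≠ c := by
      intro h
      subst h
      -- s₂ = [g, c₂] and [g, c₂] ∈ rest (as C), plus the stack [c₂, e] on top of which c₂ sits
      obtain ⟨e, heS, hfe⟩ := hsurj c₂ hcS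
      have hXe : [c₂, e] ∈ rest := hmem2 _ _ (hfe ▸ (hf e heS).2.2)
      have hne1 : ([c₂, e] : List G) ≠ [g, c₂] := by
        intro h
        simp only [List.cons.injEq, and_true] at h
        exact hcg h.1
      -- count c₂ in B ≥ 3 : s₂, C-copy, [c₂, e]-copy
      have hcnt3 : 3 ≤ tileCount B c₂ := by
        have hsub : ([g, c₂] ::ₘ [g, c₂] ::ₘ [c₂, e] ::ₘ 0 : Board G) ≤ B := by
          rw [hBeq, hs₂eq]
          rw [show s₁ ::ₘ [g, c₂] ::ₘ rest = [g, c₂] ::ₘ s₁ ::ₘ rest from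
            Multiset.cons_swap _ _ _]
          apply Multiset.cons_le_cons
          refine le_trans ?_ (Multiset.le_cons_self _ _)
          exact pair_le hCmem hXe (fun h => hne1 h.symm)
        have hlec := tileCount_le_of_le hsub c₂
        rw [tileCount_cons, tileCount_cons, tileCount_cons] at hlec
        have hc1 : 1 ≤ List.count c₂ [g, c₂] := by simp [List.count_cons]
        have hc2 : 1 ≤ List.count c₂ [c₂, e] := by simp [List.count_cons]
        have hz : tileCount (0 : Board G) c₂ = 0 := rfl
        omega
      have hcv : tileCount B c₂ = 2 := by
        have := (hf c₂ hcS).2.1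
        have := hcnt c₂
        rw [if_neg hcg] at this
        omega
      omega
    -- the synchronisation lemma
    have hmapS : ∀ a ∈ S, f a ∈ S := fun a ha => (hf a ha).1
    have hmapS₂ : ∀ a ∈ S₂, f₂ a ∈ S₂ := fun a ha => (hf₂ a ha).1
    have hsync : ∀ a, a ∈ S → a ∈ S₂ → a ≠ g → f₂ a = f a := by
      intro a haS haS₂ hag
      have hca : tileCount B a = 2 := by
        have := (hf a haS).2.1
        have := hcnt a
        rw [if_neg hag] at this
        omega
      obtain ⟨am, hamS, hfam⟩ := hsurj a haS
      have hX : [a, am] ∈ B := by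
        rw [hBeq]
        exact Multiset.mem_cons_of_mem (Multiset.mem_cons_of_mem
          (hmem2 _ _ (hfam ▸ (hf am hamS).2.2)))
      have hY : [f a, a] ∈ B := by
        rw [hBeq]
        exact Multiset.mem_cons_of_mem (Multiset.mem_cons_of_mem
          (hmem2 _ _ (hf a haS).2.2))
      have hZ : [f₂ a, a] ∈ B := hmemB' _ _ (hf₂ a haS₂).2.2
      by_cases hfaa : f a = a
      · -- then am = a and [a, a] ∈ B with both a-tiles
        have ham : am = a := hinj hamS haS (by rw [hfam, hfaa])
        rw [ham] at hX
        by_contra hne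
        have hZX : ([f₂ a, a] : List G) ≠ [a, a] := by
          intro h
          simp only [List.cons.injEq, and_true] at h
          exact hne (h.trans hfaa.symm)
        have := count2_pin (g := a) hX (by simp) hZ hZX (by simp)
        omega
      · have hama : am ≠ a := by
          intro h; rw [h] at hfam; exact hfaa hfam
        have hXY : ([a, am] : List G) ≠ [f a, a] := by
          intro h
          simp only [List.cons.injEq, and_true] at h
          exact hfaa h.1.symm
        by_contra hne
        have hZX : ([f₂ a, a] : List G) ≠ [a, am] := by
          intro h
          simp only [List.cons.injEq, and_true] at h
          exact hama h.2.symm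
        have hZY : ([f₂ a, a] : List G) ≠ [f a, a] := by
          intro h
          simp only [List.cons.injEq, and_true] at h
          exact hne h
        have := three_le_tileCount (g := a) hX hY hZ hXY (fun h => hZX h.symm)
          (fun h => hZY h.symm) (by simp) (by simp) (by simp)
        omega
    -- the orbit of g under f returns to g
    obtain ⟨N₀, hN₀pos, hN₀⟩ := exists_return hmapS hinj hgS
    have hexN : ∃ n, 0 < n ∧ f^[n] g = g := ⟨N₀, hN₀pos, hN₀⟩
    set N := Nat.find hexN with hNdef
    obtain ⟨hNpos, hNg⟩ := Nat.find_spec hexN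
    rw [← hNdef] at hNg
    have hNmin : ∀ m, m < N → ¬ (0 < m ∧ f^[m] g = g) := fun m hm => Nat.find_min hexN hm
    have hN2 : 2 ≤ N := by
      by_contra hcon
      have hN1 : N = 1 := by omega
      rw [hN1] at hNg
      simp at hNg
      exact hfgg hNg
    -- synchronised orbits
    have horbsync : ∀ n, 1 ≤ n → n < N →
        f₂^[n] g = f^[n] g ∧ f^[n] g ∈ S ∧ f^[n] g ∈ S₂ := by
      intro n
      induction n with
      | zero => omega
      | succ n ih =>
        intro _ hlt
        rcases Nat.eq_zero_or_pos n with rfl | hn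
        · refine ⟨by simpa using hfg₂, by simpa using hmapS g hgS, ?_⟩
          have := hmapS₂ g hgS₂
          rw [hfg₂] at this
          simpa using this
        · obtain ⟨hsy, hS', hS₂'⟩ := ih hn (by omega)
          have hwg : f^[n] g ≠ g := by
            intro h
            exact hNmin n (by omega) ⟨hn, h⟩
          have hstep := hsync (f^[n] g) hS' hS₂' hwg
          constructor
          · rw [Function.iterate_succ_apply', Function.iterate_succ_apply', hsy, hstep]
          constructor
          · rw [Function.iterate_succ_apply']
            exact hmapS _ hS'
          · rw [Function.iterate_succ_apply', ← hstep]
            exact hmapS₂ _ hS₂'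
    -- conclude : the element just before g in the orbit equals both c and c₂
    obtain ⟨hsy, hwS, hwS₂⟩ := horbsync (N - 1) (by omega) (by omega)
    have hfw : f (f^[N - 1] g) = g := by
      have h' : f^[N - 1 + 1] g = g := by
        rw [show N - 1 + 1 = N by omega]; exact hNg
      rw [Function.iterate_succ_apply'] at h'
      exact h'
    have hwg : f^[N - 1] g ≠ g := fun h =>
      hNmin (N - 1) (by omega) ⟨by omega, h⟩
    have hf₂w : f₂ (f^[N - 1] g) = g := by
      rw [hsync _ hwS hwS₂ hwg, hfw]
    have hwc : f^[N - 1] g = c := hinj hwS hcS (by rw [hfw, hfc])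
    have hwc₂ : f^[N - 1] g = c₂ := hinj₂ hwS₂ hc₂S (by rw [hf₂w, hfc₂])
    exact hcc₂ (hwc₂.symm.trans hwc)

end Aux

/-- every board of isolated stacks of heights one and two in which
every present group has exactly four tiles is solvable. -/
theorem stmt9 (B : Board G) (hH : HeightsOK B)
    (h4 : ∀ g : G, tileCount B g ≠ 0 → tileCount B g = 4) :
    Solvable B := by
  classical
  -- strong induction on the number of tiles with the invariant
  suffices haux : ∀ n (B : Board G), totalTiles B = n → HeightsOK B →
      (∀ g, tileCount B g = 0 ∨ tileCount B g = 2 ∨ tileCount B g = 4) →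
      ¬ HasBlockedCycle B → Solvable B by
    apply haux (totalTiles B) B rfl hH
    · intro g
      by_cases h : tileCount B g = 0
      · exact Or.inl h
      · exact Or.inr (Or.inr (h4 g h))
    · rintro ⟨k, p, hinj, hcnt, hstk⟩
      have hmem := hstk 0
      have hne : tileCount B (p 0) ≠ 0 := by
        have := one_le_tileCount_of_mem hmem (by simp : p 0 ∈ [p (0 + 1), p 0])
        omega
      have := h4 (p 0) hne
      have := hcnt 0
      omega
  intro n
  induction n using Nat.strong_induction_on with
  | _ n ih =>
    intro B hn hHB h24 hnc
    by_cases hB0 : B = 0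
    · subst hB0; exact Relation.ReflTransGen.refl
    · obtain ⟨B', hmv, hnc'⟩ := exists_safe_move hB0 hHB h24 hnc
      obtain ⟨g, s₁, s₂, rest, hBeq, h1, h2, hB'eq⟩ := hmv
      have hs₁B : s₁ ∈ B := by rw [hBeq]; simp
      have hs₂B : s₂ ∈ B := by rw [hBeq]; simp
      have hn1 : s₁ ≠ [] := (hHB s₁ hs₁B).1
      have hn2 : s₂ ≠ [] := (hHB s₂ hs₂B).1
      have hH' : HeightsOK B' := by
        rw [hB'eq]
        apply heightsOK_play
        rw [← hBeq]
        exact hHB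
      have hcnt : ∀ a, tileCount B a = tileCount B' a + (if a = g then 2 else 0) := by
        intro a; rw [hBeq, hB'eq]; exact tileCount_play h1 h2 a
      have hg2 : 2 ≤ tileCount B g := by
        have hs1 : 1 ≤ s₁.count g := by
          rw [head_cons_tail h1]; simp [List.count_cons]
        have hs2 : 1 ≤ s₂.count g := by
          rw [head_cons_tail h2]; simp [List.count_cons]
        have : tileCount B g = s₁.count g + s₂.count g + tileCount rest g := by
          rw [hBeq, tileCount_cons, tileCount_cons]; omega
        omega
      have h24' : ∀ a, tileCount B' a = 0 ∨ tileCount B' a = 2 ∨ tileCount B' a = 4 := by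
        intro a
        have := hcnt a
        have := h24 a
        by_cases hag : a = g
        · subst hag
          rw [if_pos rfl] at *
          omega
        · rw [if_neg hag] at *
          omega
      have htot : totalTiles B' + 2 = totalTiles B := by
        rw [hBeq, hB'eq]
        exact totalTiles_play hn1 hn2
      have hlt : totalTiles B' < n := by omega
      exact Relation.ReflTransGen.head ⟨g, s₁, s₂, rest, hBeq, h1, h2, hB'eq⟩
        (ih _ hlt B' rfl hH' h24' hnc')
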